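/- arXiv:1102.3722 — 5 statements merged into one kernel-verified Lean document; each statement's English description precedes it below -/
import Mathlib

section
/- Let d ≥ 3 and L ≥ 0 be integers, let α be a real number, and define the sequence x_n = (d−1)^{−n/2}·sin((L+1−n)·α) for integers n. Then x_{L+1} = 0, and for every integer n the recurrence x_n − (1/d)·x_{n−1} − ((d−1)/d)·x_{n+1} = λ·x_n holds with λ = 1 − (2/d)·√(d−1)·cos α. -/
/-- For integers `d ≥ 3`, `L ≥ 0`, a real `α`, the sequence
`x n = (d−1)^{−n/2}·sin((L+1−n)·α)` (indexed by `n : ℤ`) satisfies the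
Dirichlet boundary condition `x (L+1) = 0` and the recurrence
`x n − (1/d)·x (n−1) − ((d−1)/d)·x (n+1) = λ·x n` with
`λ = 1 − (2/d)·√(d−1)·cos α`. -/
theorem azimuthal_sequence_satisfies_recurrence (d L : ℕ) (hd : 3 ≤ d) (α : ℝ) :
    let x : ℤ → ℝ := fun n =>
      ((d : ℝ) - 1) ^ (-(n : ℝ) / 2) * Real.sin (((L : ℝ) + 1 - (n : ℝ)) * α)
    x ((L : ℤ) + 1) = 0 ∧
    ∀ n : ℤ, x n - (1 / (d : ℝ)) * x (n - 1) - (((d : ℝ) - 1) / (d : ℝ)) * x (n + 1)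
      = (1 - (2 / (d : ℝ)) * Real.sqrt ((d : ℝ) - 1) * Real.cos α) * x n := by
  have hd3 : (3:ℝ) ≤ (d:ℝ) := by exact_mod_cast hd
  have hr : (0:ℝ) < (d:ℝ) - 1 := by linarith
  have hdne : (d:ℝ) ≠ 0 := by linarith
  have hs : Real.sqrt ((d:ℝ) - 1) ≠ 0 := by positivity
  have hss : Real.sqrt ((d:ℝ) - 1) * Real.sqrt ((d:ℝ) - 1) = (d:ℝ) - 1 :=
    Real.mul_self_sqrt hr.le
  intro x
  constructor
  · show ((d : ℝ) - 1) ^ (-(((L:ℤ)+1 : ℤ) : ℝ) / 2) *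
      Real.sin (((L : ℝ) + 1 - (((L:ℤ)+1 : ℤ) : ℝ)) * α) = 0
    have h0 : ((L : ℝ) + 1 - (((L:ℤ)+1 : ℤ) : ℝ)) = 0 := by push_cast; ring
    rw [h0]; simp
  · intro n
    show ((d : ℝ) - 1) ^ (-(n : ℝ) / 2) * Real.sin (((L : ℝ) + 1 - (n : ℝ)) * α)
        - (1 / (d : ℝ)) * (((d : ℝ) - 1) ^ (-((n-1 : ℤ) : ℝ) / 2) *
          Real.sin (((L : ℝ) + 1 - ((n-1 : ℤ) : ℝ)) * α))
        - (((d : ℝ) - 1) / (d : ℝ)) * (((d : ℝ) - 1) ^ (-((n+1 : ℤ) : ℝ) / 2) *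
          Real.sin (((L : ℝ) + 1 - ((n+1 : ℤ) : ℝ)) * α))
      = (1 - (2 / (d : ℝ)) * Real.sqrt ((d : ℝ) - 1) * Real.cos α) *
        (((d : ℝ) - 1) ^ (-(n : ℝ) / 2) * Real.sin (((L : ℝ) + 1 - (n : ℝ)) * α))
    have c1 : ((n - 1 : ℤ) : ℝ) = (n : ℝ) - 1 := by push_cast; ring
    have c2 : ((n + 1 : ℤ) : ℝ) = (n : ℝ) + 1 := by push_cast; ring
    rw [c1, c2]
    set θ := ((L : ℝ) + 1 - (n : ℝ)) * α with hθ
    have t1 : ((L : ℝ) + 1 - ((n : ℝ) - 1)) * α = θ + α := by rw [hθ]; ring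
    have t2 : ((L : ℝ) + 1 - ((n : ℝ) + 1)) * α = θ - α := by rw [hθ]; ring
    rw [t1, t2, Real.sin_add, Real.sin_sub]
    have e1 : ((d : ℝ) - 1) ^ (-((n : ℝ) - 1) / 2)
        = ((d : ℝ) - 1) ^ (-(n : ℝ) / 2) * Real.sqrt ((d:ℝ) - 1) := by
      rw [Real.sqrt_eq_rpow, ← Real.rpow_add hr]
      ring_nf
    rw [e1]
    set p := ((d : ℝ) - 1) ^ (-(n : ℝ) / 2) with hp
    have e2 : ((d : ℝ) - 1) * ((d : ℝ) - 1) ^ (-((n : ℝ) + 1) / 2)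
        = p * Real.sqrt ((d:ℝ) - 1) := by
      rw [hp, Real.sqrt_eq_rpow, ← Real.rpow_add hr]
      nth_rewrite 1 [← Real.rpow_one ((d:ℝ) - 1)]
      rw [← Real.rpow_add hr]
      ring_nf
    linear_combination ((1 / (d:ℝ)) *
      (Real.cos θ * Real.sin α - Real.sin θ * Real.cos α)) * e2
end

section
/- For integers d ≥ 3 and L ≥ 0, the equation d·sin α·cos((L+1)·α) + (d−2)·cos α·sin((L+1)·α) = 0 has exactly L+1 solutions α in the open interval (0, π). -/
open Polynomial Real

lemma Uaux : ∀ n : ℕ, (Chebyshev.U ℝ (n:ℤ)).natDegree ≤ n ∧ (Chebyshev.U ℝ (n:ℤ)).coeff n = 2^n := by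
  intro n
  induction n using Nat.strong_induction_on with
  | _ n ih =>
    match n with
    | 0 => simp [Chebyshev.U_zero]
    | 1 =>
      have h : Chebyshev.U ℝ ((1:ℕ):ℤ) = 2 * X := by norm_num [Chebyshev.U_one]
      refine ⟨?_, ?_⟩
      · rw [h]; exact (Polynomial.natDegree_mul_le).trans (by simp)
      · simp [h]
    | (n+2) =>
      obtain ⟨h1d, h1c⟩ := ih (n+1) (by omega)
      obtain ⟨h0d, h0c⟩ := ih n (by omega)
      have h1d' : (Chebyshev.U ℝ ((n:ℤ)+1)).natDegree ≤ n+1 := by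
        have : ((n:ℤ)+1) = ((n+1 : ℕ) : ℤ) := by push_cast; ring
        rw [this]; exact h1d
      have h1c' : (Chebyshev.U ℝ ((n:ℤ)+1)).coeff (n+1) = 2^(n+1) := by
        have : ((n:ℤ)+1) = ((n+1 : ℕ) : ℤ) := by push_cast; ring
        rw [this]; exact h1c
      have hrec : Chebyshev.U ℝ (((n:ℕ)+2 : ℕ) : ℤ) = 2 * (X * Chebyshev.U ℝ ((n:ℤ)+1)) - Chebyshev.U ℝ (n:ℤ) := by
        push_cast
        rw [← mul_assoc]
        exact Chebyshev.U_add_two ℝ n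
      constructor
      · rw [hrec]
        refine (Polynomial.natDegree_sub_le _ _).trans (max_le ?_ (by omega))
        refine (Polynomial.natDegree_mul_le).trans ?_
        have : (X * Chebyshev.U ℝ ((n:ℤ)+1)).natDegree ≤ 1 + (n+1) := by
          refine (Polynomial.natDegree_mul_le).trans (by simp [Polynomial.natDegree_X]; omega)
        simp only [Polynomial.natDegree_ofNat]
        omega
      · rw [hrec]
        rw [Polynomial.coeff_sub]
        rw [Polynomial.coeff_eq_zero_of_natDegree_lt (lt_of_le_of_lt h0d (by omega))]
        have hx : (X * Chebyshev.U ℝ ((n:ℤ)+1)).coeff (n+2) = (Chebyshev.U ℝ ((n:ℤ)+1)).coeff (n+1) :=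
          Polynomial.coeff_X_mul _ _
        have h2 : (2 * (X * Chebyshev.U ℝ ((n:ℤ)+1))).coeff (n+2) = 2 * (X * Chebyshev.U ℝ ((n:ℤ)+1)).coeff (n+2) := by
          simp
        rw [h2, hx, h1c']
        ring

lemma sin_odd_mul_pi_div_two (j : ℕ) : Real.sin ((2*(j:ℝ)+1) * π / 2) = (-1)^j := by
  have h : (2*(j:ℝ)+1) * π / 2 = (j:ℝ)*π + π/2 := by ring
  rw [h, Real.sin_add_pi_div_two]
  have := Real.cos_nat_mul_pi_sub 0 j
  simpa using this

/-- For integers `d ≥ 3` and `L ≥ 0`, the equation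
`d·sin α·cos((L+1)α) + (d−2)·cos α·sin((L+1)α) = 0` has exactly `L+1`
solutions `α` in the open interval `(0, π)`. -/
theorem eigenvalue_condition_solution_count (d L : ℕ) (hd : 3 ≤ d) :
    {α : ℝ | α ∈ Set.Ioo 0 Real.pi ∧
      (d : ℝ) * Real.sin α * Real.cos (((L : ℝ) + 1) * α)
        + ((d : ℝ) - 2) * Real.cos α * Real.sin (((L : ℝ) + 1) * α) = 0}.ncard
      = L + 1 := by
  set g : ℝ → ℝ := fun α => ((d:ℝ)-1) * Real.sin (((L:ℝ)+2)*α) - Real.sin ((L:ℝ)*α) with hg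
  have key : ∀ α : ℝ, (d : ℝ) * Real.sin α * Real.cos (((L : ℝ) + 1) * α)
        + ((d : ℝ) - 2) * Real.cos α * Real.sin (((L : ℝ) + 1) * α) = g α := by
    intro α
    have h1 : ((L:ℝ)+2)*α = ((L:ℝ)+1)*α + α := by ring
    have h2 : (L:ℝ)*α = ((L:ℝ)+1)*α - α := by ring
    simp only [hg, h1, h2, Real.sin_add, Real.sin_sub]
    ring
  set S := {α : ℝ | α ∈ Set.Ioo 0 Real.pi ∧
      (d : ℝ) * Real.sin α * Real.cos (((L : ℝ) + 1) * α)
        + ((d : ℝ) - 2) * Real.cos α * Real.sin (((L : ℝ) + 1) * α) = 0} with hS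
  have hSg : S = {α : ℝ | α ∈ Set.Ioo 0 Real.pi ∧ g α = 0} := by
    ext α; simp only [hS, Set.mem_setOf_eq, key]
  -- the polynomial
  set Q : ℝ[X] := C ((d:ℝ)-1) * Chebyshev.U ℝ ((L:ℤ)+1) - Chebyshev.U ℝ ((L:ℤ)-1) with hQ
  have hcast1 : ((L:ℤ)+1) = ((L+1 : ℕ) : ℤ) := by push_cast; ring
  have hd1 : (0:ℝ) < (d:ℝ) - 1 := by
    have : (3:ℝ) ≤ (d:ℝ) := by exact_mod_cast hd
    linarith
  have hevalQ : ∀ α : ℝ, Q.eval (Real.cos α) * Real.sin α = g α := by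
    intro α
    have e1 := Chebyshev.U_real_cos α ((L:ℤ)+1)
    have e2 := Chebyshev.U_real_cos α ((L:ℤ)-1)
    push_cast at e1 e2
    simp only [hQ, Polynomial.eval_sub, Polynomial.eval_mul, Polynomial.eval_C, hg]
    rw [sub_mul, mul_assoc, e1, e2]
    ring_nf
  have hcoeffQ : Q.coeff (L+1) = ((d:ℝ)-1) * 2^(L+1) := by
    have h1 := (Uaux (L+1)).2
    have h0 : (Chebyshev.U ℝ ((L:ℤ)-1)).coeff (L+1) = 0 := by
      cases L with
      | zero => norm_num [Chebyshev.U_neg_one]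
      | succ k =>
        have hc : ((k+1:ℕ):ℤ) - 1 = ((k:ℕ):ℤ) := by push_cast; ring
        rw [hc]
        exact Polynomial.coeff_eq_zero_of_natDegree_lt (lt_of_le_of_lt (Uaux k).1 (by omega))
    simp only [hQ, Polynomial.coeff_sub, Polynomial.coeff_C_mul, h0, hcast1, h1]
    ring
  have hQ0 : Q ≠ 0 := fun h => by
    rw [h, Polynomial.coeff_zero] at hcoeffQ
    have : ((d:ℝ)-1) * 2^(L+1) > 0 := by positivity
    linarith [hcoeffQ]
  have hdegQ : Q.natDegree ≤ L + 1 := by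
    refine (Polynomial.natDegree_sub_le _ _).trans (max_le ?_ ?_)
    · refine (Polynomial.natDegree_mul_le).trans ?_
      rw [Polynomial.natDegree_C, hcast1, zero_add]
      exact (Uaux (L+1)).1
    · cases L with
      | zero => norm_num [Chebyshev.U_neg_one]
      | succ k =>
        have hc : ((k+1:ℕ):ℤ) - 1 = ((k:ℕ):ℤ) := by push_cast; ring
        rw [hc]; exact (Uaux k).1.trans (by omega)
  -- membership in roots
  have hmem : ∀ α ∈ S, Real.cos α ∈ (Q.roots.toFinset : Set ℝ) := by
    intro α hα
    rw [hSg] at hα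
    obtain ⟨⟨h0, hπ⟩, heq⟩ := hα
    have hsin : Real.sin α > 0 := Real.sin_pos_of_pos_of_lt_pi h0 hπ
    have : Q.eval (Real.cos α) * Real.sin α = 0 := by rw [hevalQ]; exact heq
    have hroot : Q.eval (Real.cos α) = 0 := by
      rcases mul_eq_zero.mp this with h | h
      · exact h
      · linarith
    exact Multiset.mem_toFinset.mpr ((Polynomial.mem_roots hQ0).mpr hroot)
  have hinj : Set.InjOn Real.cos S := by
    refine Real.injOn_cos.mono ?_
    intro α hα
    rw [hSg] at hα
    exact ⟨le_of_lt hα.1.1, le_of_lt hα.1.2⟩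
  -- upper bound
  have hub : S.ncard ≤ L + 1 := by
    refine le_trans (Set.ncard_le_ncard_of_injOn Real.cos hmem hinj (Q.roots.toFinset.finite_toSet)) ?_
    rw [Set.ncard_coe_finset]
    exact le_trans (Multiset.toFinset_card_le _) (le_trans (Polynomial.card_roots' Q) hdegQ)
  have hSfin : S.Finite := Set.Finite.of_finite_image
    ((Q.roots.toFinset.finite_toSet).subset (Set.image_subset_iff.mpr hmem)) hinj
  -- lower bound: IVT
  set a : ℕ → ℝ := fun j => (2*(j:ℝ)+1) * π / (2*((L:ℝ)+2)) with ha
  have hL2 : (0:ℝ) < (L:ℝ)+2 := by positivity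
  have hπ : (0:ℝ) < π := Real.pi_pos
  have hamono : ∀ i j : ℕ, i < j → a i < a j := by
    intro i j hij
    have : (i:ℝ) < (j:ℝ) := by exact_mod_cast hij
    have hnum : (2*(i:ℝ)+1)*π < (2*(j:ℝ)+1)*π := by nlinarith
    rw [ha]
    exact (div_lt_div_iff_of_pos_right (by positivity)).mpr hnum
  have hsign : ∀ j : ℕ, g (a j) = ((d:ℝ)-1) * (-1)^j - Real.sin ((L:ℝ) * a j) := by
    intro j
    have harg : ((L:ℝ)+2) * a j = (2*(j:ℝ)+1) * π / 2 := by
      rw [ha]; field_simp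
    rw [hg]
    simp only [harg, sin_odd_mul_pi_div_two]
  have hgsign : ∀ j : ℕ, 0 < (-1)^j * g (a j) := by
    intro j
    have hbound := Real.neg_one_le_sin ((L:ℝ) * a j)
    have hbound2 := Real.sin_le_one ((L:ℝ) * a j)
    have hd3 : (3:ℝ) ≤ (d:ℝ) := by exact_mod_cast hd
    rw [hsign]
    rcases Nat.even_or_odd j with he | ho
    · rw [he.neg_one_pow]; nlinarith
    · rw [ho.neg_one_pow]; nlinarith
  have hgcont : Continuous g := by
    apply Continuous.sub
    · exact continuous_const.mul (Real.continuous_sin.comp (continuous_const.mul continuous_id))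
    · exact Real.continuous_sin.comp (continuous_const.mul continuous_id)
  have hroots : ∀ j : ℕ, ∃ β ∈ Set.Ioo (a j) (a (j+1)), g β = 0 := by
    intro j
    have hle : a j ≤ a (j+1) := le_of_lt (hamono j (j+1) (by omega))
    have hsj := hgsign j
    have hsj1 := hgsign (j+1)
    rcases Nat.even_or_odd j with he | ho
    · have h1 : 0 < g (a j) := by rw [he.neg_one_pow] at hsj; linarith
      have h2 : g (a (j+1)) < 0 := by
        have : Odd (j+1) := Even.add_one he
        rw [this.neg_one_pow] at hsj1; linarith
      obtain ⟨β, hβ, hβ0⟩ := intermediate_value_Ioo' hle hgcont.continuousOn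
        (Set.mem_Ioo.mpr ⟨h2, h1⟩ : (0:ℝ) ∈ Set.Ioo (g (a (j+1))) (g (a j)))
      exact ⟨β, hβ, hβ0⟩
    · have h1 : g (a j) < 0 := by rw [ho.neg_one_pow] at hsj; linarith
      have h2 : 0 < g (a (j+1)) := by
        have : Even (j+1) := ho.add_one
        rw [this.neg_one_pow] at hsj1; linarith
      obtain ⟨β, hβ, hβ0⟩ := intermediate_value_Ioo hle hgcont.continuousOn
        (Set.mem_Ioo.mpr ⟨h1, h2⟩)
      exact ⟨β, hβ, hβ0⟩
  choose β hβmem hβ0 using hroots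
  have hβS : ∀ j ≤ L, β j ∈ S := by
    intro j hj
    rw [hSg]
    refine ⟨⟨?_, ?_⟩, hβ0 j⟩
    · have : 0 < a j := by rw [ha]; positivity
      linarith [(hβmem j).1]
    · have : a (j+1) ≤ π := by
        rw [ha]
        rw [div_le_iff₀ (by positivity)]
        have hjL : (j:ℝ) ≤ (L:ℝ) := by exact_mod_cast hj
        push_cast
        nlinarith
      linarith [(hβmem j).2]
  have hβinj : ∀ i j, i < j → β i < β j := by
    intro i j hij
    have h1 : β i < a (i+1) := (hβmem i).2
    have h2 : a j < β j := (hβmem j).1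
    have h3 : a (i+1) ≤ a j := by
      rcases Nat.lt_or_ge (i+1) j with h | h
      · exact le_of_lt (hamono _ _ h)
      · have : i + 1 = j := by omega
        rw [this]
    linarith
  have hlb : L + 1 ≤ S.ncard := by
    set F : Finset ℝ := (Finset.range (L+1)).image β with hF
    have hcard : F.card = L + 1 := by
      rw [hF, Finset.card_image_of_injOn, Finset.card_range]
      intro i hi j hj hij
      by_contra hne
      rcases Nat.lt_or_ge i j with h | h
      · exact absurd hij (ne_of_lt (hβinj i j h))
      · have : j < i := by omega
        exact absurd hij.symm (ne_of_lt (hβinj j i this))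
    have hsub : (F : Set ℝ) ⊆ S := by
      intro x hx
      simp only [hF, Finset.coe_image, Finset.coe_range, Set.mem_image, Set.mem_Iio] at hx
      obtain ⟨j, hj, rfl⟩ := hx
      exact hβS j (by omega)
    calc L + 1 = (F : Set ℝ).ncard := by rw [Set.ncard_coe_finset, hcard]
    _ ≤ S.ncard := Set.ncard_le_ncard hsub hSfin
  omega
end

section
/- Let d ≥ 3 and L ≥ 0 be integers and let α ∈ (0, π) satisfy d·sin α·cos((L+1)·α) + (d−2)·cos α·sin((L+1)·α) = 0. Define the vector v on the interior vertices of the finite d-regular tree of depth L+1 by v(u) = (d−1)^{−n/2}·sin((L+1−n)·α) for every vertex u at depth n (0 ≤ n ≤ L). Then v ≠ 0 and 𝓛_D v = λ·v with λ = 1 − (2/d)·√(d−1)·cos α. -/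
open scoped Classical

/-- Vertices of the finite (truncated) `d`-regular tree whose leaves are at depth `R`:
a vertex at depth `n ≤ R` is encoded by its depth together with its path from the root,
with an entry in `Fin d` at step `0` (the root has `d` children) and entries `< d − 1`
at steps `1, …, n−1` (each deeper non-leaf vertex has `d − 1` children, hence degree `d`);
entries at steps `≥ n` are padded by `0`. -/
abbrev TreeVertex (d R : ℕ) : Type :=
  { p : Fin (R + 1) × (Fin R → Fin d) //
      (∀ i : Fin R, p.1.1 ≤ i.1 → (p.2 i : ℕ) = 0) ∧
      (∀ i : Fin R, 0 < i.1 → i.1 < p.1.1 → (p.2 i : ℕ) < d - 1) }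

namespace TreeVertex

/-- The depth of a vertex. -/
def depth {d R : ℕ} (v : TreeVertex d R) : ℕ := v.1.1.1

/-- `ChildOf u v` means `v` is a child of `u`. -/
def ChildOf {d R : ℕ} (u v : TreeVertex d R) : Prop :=
  v.depth = u.depth + 1 ∧ ∀ i : Fin R, i.1 < u.depth → v.1.2 i = u.1.2 i

/-- `Desc u v` means `v` is a descendant of `u` (including `u` itself). -/
def Desc {d R : ℕ} (u v : TreeVertex d R) : Prop :=
  u.depth ≤ v.depth ∧ ∀ i : Fin R, i.1 < u.depth → v.1.2 i = u.1.2 i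

/-- The root of the tree (for `d > 0`). -/
def root (d R : ℕ) (hd : 0 < d) : TreeVertex d R :=
  ⟨(0, fun _ => ⟨0, hd⟩), fun _ _ => rfl, fun i _ h => absurd h (by simp)⟩

/-- Two vertices are adjacent iff one is a child of the other. -/
def Adj {d R : ℕ} (u v : TreeVertex d R) : Prop := ChildOf u v ∨ ChildOf v u

/-- The interior vertices: those of depth `< R`, i.e. the non-leaves. -/
abbrev Interior (d R : ℕ) : Type := { v : TreeVertex d R // v.depth < R }

end TreeVertex

open TreeVertex

/-- The Dirichlet Laplacian `𝓛_D` of the finite `d`-regular tree of depth `L+1`: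
the normalized Laplacian (every interior vertex has degree `d`) restricted to the rows
and columns of the interior vertices, i.e. with the leaves (depth `L+1`) deleted:
diagonal entries `1` and entry `−1/d` between adjacent interior vertices. -/
noncomputable def dirichletLaplacian (d L : ℕ) :
    Matrix (Interior d (L + 1)) (Interior d (L + 1)) ℝ := fun u v =>
  if u = v then 1 else if Adj u.1 v.1 then -(1 / (d : ℝ)) else 0
namespace TreeVertex

variable {d R : ℕ}

lemma depth_lt (u : TreeVertex d R) : u.depth < R + 1 := u.1.1.isLt

lemma vertex_ext {u w : TreeVertex d R} (hdep : u.depth = w.depth)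
    (hfun : ∀ i : Fin R, i.1 < u.depth → u.1.2 i = w.1.2 i) : u = w := by
  apply Subtype.ext
  have h1 : u.1.1 = w.1.1 := Fin.ext hdep
  have h2 : u.1.2 = w.1.2 := by
    funext i
    by_cases hi : i.1 < u.depth
    · exact hfun i hi
    · have e1 : (u.1.2 i : ℕ) = 0 := u.2.1 i (le_of_not_gt hi)
      have e2 : (w.1.2 i : ℕ) = 0 :=
        w.2.1 i (show w.depth ≤ i.1 by rw [← hdep]; exact le_of_not_gt hi)
      exact Fin.ext (by rw [e1, e2])
  exact Prod.ext h1 h2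

/-- The path function of the `j`-th child of a vertex. -/
def childFun (u : TreeVertex d R) (j : Fin d) : Fin R → Fin d := fun i =>
  if i.1 < u.depth then u.1.2 i else if i.1 = u.depth then j
    else ⟨0, lt_of_le_of_lt (Nat.zero_le _) j.isLt⟩

/-- The `j`-th child of a non-leaf vertex. -/
def mkChild (u : TreeVertex d R) (h : u.depth < R) (j : Fin d)
    (hj : u.depth = 0 ∨ (j : ℕ) < d - 1) : TreeVertex d R :=
  ⟨(⟨u.depth + 1, by omega⟩, childFun u j),
   ⟨fun i hi => by
      have hi' : u.depth + 1 ≤ i.1 := hi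
      show ((childFun u j i : Fin d) : ℕ) = 0
      rw [childFun, if_neg (by omega), if_neg (by omega)],
    fun i hi1 hi2 => by
      have hi2' : i.1 < u.depth + 1 := hi2
      show ((childFun u j i : Fin d) : ℕ) < d - 1
      rw [childFun]
      by_cases hlt : i.1 < u.depth
      · rw [if_pos hlt]; exact u.2.2 i hi1 hlt
      · rw [if_neg hlt, if_pos (by omega)]
        rcases hj with h0 | h0
        · omega
        · exact h0⟩⟩

lemma depth_mkChild (u : TreeVertex d R) (h : u.depth < R) (j : Fin d)
    (hj : u.depth = 0 ∨ (j : ℕ) < d - 1) : (mkChild u h j hj).depth = u.depth + 1 := rfl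

lemma entry_mkChild (u : TreeVertex d R) (h : u.depth < R) (j : Fin d)
    (hj : u.depth = 0 ∨ (j : ℕ) < d - 1) :
    (mkChild u h j hj).1.2 ⟨u.depth, h⟩ = j := by
  show childFun u j ⟨u.depth, h⟩ = j
  rw [childFun]
  rw [if_neg (lt_irrefl _), if_pos rfl]

lemma childOf_mkChild (u : TreeVertex d R) (h : u.depth < R) (j : Fin d)
    (hj : u.depth = 0 ∨ (j : ℕ) < d - 1) : ChildOf u (mkChild u h j hj) := by
  refine ⟨rfl, fun i hi => ?_⟩
  show childFun u j i = u.1.2 i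
  rw [childFun, if_pos hi]

lemma eq_mkChild_of_childOf {u w : TreeVertex d R} (h : u.depth < R)
    (hw : ChildOf u w) :
    ∃ (hj : u.depth = 0 ∨ ((w.1.2 ⟨u.depth, h⟩ : Fin d) : ℕ) < d - 1),
      w = mkChild u h (w.1.2 ⟨u.depth, h⟩) hj := by
  have hj : u.depth = 0 ∨ ((w.1.2 ⟨u.depth, h⟩ : Fin d) : ℕ) < d - 1 := by
    by_cases h0 : u.depth = 0
    · exact Or.inl h0
    · refine Or.inr (w.2.2 ⟨u.depth, h⟩ (show 0 < u.depth by omega) ?_)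
      show u.depth < w.depth
      rw [hw.1]; omega
  refine ⟨hj, vertex_ext ?_ ?_⟩
  · rw [hw.1]; rfl
  · intro i hi
    have hi' : i.1 < u.depth + 1 := by
      have : w.depth = u.depth + 1 := hw.1
      omega
    show w.1.2 i = childFun u (w.1.2 ⟨u.depth, h⟩) i
    rw [childFun]
    by_cases hlt : i.1 < u.depth
    · rw [if_pos hlt]; exact hw.2 i hlt
    · rw [if_neg hlt, if_pos (by omega)]
      have hie : i = ⟨u.depth, h⟩ := Fin.ext (show i.1 = u.depth by omega)
      rw [hie]

/-- The path function of the parent of a vertex. -/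
def parentFun (hd : 0 < d) (u : TreeVertex d R) : Fin R → Fin d := fun i =>
  if i.1 < u.depth - 1 then u.1.2 i else ⟨0, hd⟩

/-- The parent of a vertex. -/
def mkParent (hd : 0 < d) (u : TreeVertex d R) : TreeVertex d R :=
  ⟨(⟨u.depth - 1, by have := u.depth_lt; omega⟩, parentFun hd u),
   ⟨fun i hi => by
      have hi' : u.depth - 1 ≤ i.1 := hi
      show ((parentFun hd u i : Fin d) : ℕ) = 0
      rw [parentFun, if_neg (not_lt.mpr hi')],
    fun i hi1 hi2 => by
      have hi2' : i.1 < u.depth - 1 := hi2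
      show ((parentFun hd u i : Fin d) : ℕ) < d - 1
      rw [parentFun, if_pos hi2']
      exact u.2.2 i hi1 (lt_of_lt_of_le hi2' (Nat.sub_le _ _))⟩⟩

lemma depth_mkParent (hd : 0 < d) (u : TreeVertex d R) :
    (mkParent hd u).depth = u.depth - 1 := rfl

lemma childOf_mkParent (hd : 0 < d) (u : TreeVertex d R) (h : 1 ≤ u.depth) :
    ChildOf (mkParent hd u) u := by
  refine ⟨by rw [depth_mkParent]; omega, fun i hi => ?_⟩
  rw [depth_mkParent] at hi
  show u.1.2 i = parentFun hd u i
  rw [parentFun, if_pos hi]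

lemma eq_mkParent_of_childOf {u w : TreeVertex d R} (hd : 0 < d)
    (hw : ChildOf w u) : w = mkParent hd u := by
  have hdep : w.depth = u.depth - 1 := by have := hw.1; omega
  refine vertex_ext (by rw [hdep, depth_mkParent]) (fun i hi => ?_)
  show w.1.2 i = parentFun hd u i
  rw [parentFun, if_pos (show i.1 < u.depth - 1 by rw [hdep] at hi; exact hi), hw.2 i hi]

lemma not_childOf_self (u : TreeVertex d R) : ¬ ChildOf u u := fun h => by
  have := h.1; omega

end TreeVertex
namespace TreeVertex

variable {d R : ℕ}

lemma children_filter_eq_empty (u : Interior d R) (h : u.1.depth + 1 = R) :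
    (Finset.univ.filter fun w : Interior d R => ChildOf u.1 w.1) = ∅ := by
  rw [Finset.filter_eq_empty_iff]
  intro w _ hw
  have h1 : w.1.depth = u.1.depth + 1 := hw.1
  have h2 : w.1.depth < R := w.2
  omega

lemma parent_filter_eq_empty (u : Interior d R) (h : u.1.depth = 0) :
    (Finset.univ.filter fun w : Interior d R => ChildOf w.1 u.1) = ∅ := by
  rw [Finset.filter_eq_empty_iff]
  intro w _ hw
  have h1 : u.1.depth = w.1.depth + 1 := hw.1
  omega

lemma parent_filter_eq_singleton (hd : 0 < d) (u : Interior d R) (h : 1 ≤ u.1.depth) :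
    (Finset.univ.filter fun w : Interior d R => ChildOf w.1 u.1)
      = {⟨mkParent hd u.1, by rw [depth_mkParent]; have := u.2; omega⟩} := by
  ext w
  simp only [Finset.mem_filter, Finset.mem_univ, true_and, Finset.mem_singleton]
  constructor
  · intro hw
    exact Subtype.ext (eq_mkParent_of_childOf hd hw)
  · rintro rfl
    exact childOf_mkParent hd u.1 h

lemma child_inj_aux {u : TreeVertex d R} (hR : u.depth < R) {w1 w2 : TreeVertex d R}
    (hw1 : ChildOf u w1) (hw2 : ChildOf u w2)
    (he : w1.1.2 ⟨u.depth, hR⟩ = w2.1.2 ⟨u.depth, hR⟩) : w1 = w2 := by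
  apply vertex_ext
  · rw [hw1.1, hw2.1]
  · intro i hi
    have hd1 : w1.depth = u.depth + 1 := hw1.1
    by_cases hlt : i.1 < u.depth
    · rw [hw1.2 i hlt, hw2.2 i hlt]
    · have hie : i = ⟨u.depth, hR⟩ := Fin.ext (show i.1 = u.depth by omega)
      rw [hie]; exact he

lemma children_filter_card_root (u : Interior d R) (h0 : u.1.depth = 0)
    (h : u.1.depth + 1 < R) :
    (Finset.univ.filter fun w : Interior d R => ChildOf u.1 w.1).card = d := by
  have hR : u.1.depth < R := by omega
  suffices h' : (Finset.univ.filter fun w : Interior d R => ChildOf u.1 w.1).card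
      = (Finset.univ : Finset (Fin d)).card by rw [h', Finset.card_fin]
  apply Finset.card_bij (fun (w : Interior d R) _ => w.1.1.2 ⟨u.1.depth, hR⟩)
  · intro a ha; exact Finset.mem_univ _
  · intro w1 hw1 w2 hw2 he
    simp only [Finset.mem_filter, Finset.mem_univ, true_and] at hw1 hw2
    exact Subtype.ext (child_inj_aux hR hw1 hw2 he)
  · intro j _
    refine ⟨⟨mkChild u.1 hR j (Or.inl h0), by rw [depth_mkChild]; omega⟩, ?_, ?_⟩
    · simp only [Finset.mem_filter, Finset.mem_univ, true_and]
      exact childOf_mkChild u.1 hR j (Or.inl h0)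
    · exact entry_mkChild u.1 hR j (Or.inl h0)

lemma children_filter_card (u : Interior d R) (h0 : 1 ≤ u.1.depth)
    (h : u.1.depth + 1 < R) :
    (Finset.univ.filter fun w : Interior d R => ChildOf u.1 w.1).card = d - 1 := by
  have hR : u.1.depth < R := by omega
  suffices h' : (Finset.univ.filter fun w : Interior d R => ChildOf u.1 w.1).card
      = (Finset.univ : Finset (Fin (d - 1))).card by rw [h', Finset.card_fin]
  have hentry : ∀ w : Interior d R, ChildOf u.1 w.1 →
      ((w.1.1.2 ⟨u.1.depth, hR⟩ : Fin d) : ℕ) < d - 1 := by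
    intro w hw
    refine w.1.2.2 ⟨u.1.depth, hR⟩ (show 0 < u.1.depth by omega) ?_
    show u.1.depth < w.1.depth
    rw [hw.1]; omega
  apply Finset.card_bij (fun (w : Interior d R) hw =>
    (⟨(w.1.1.2 ⟨u.1.depth, hR⟩ : Fin d), by
        refine hentry w ?_
        simpa only [Finset.mem_filter, Finset.mem_univ, true_and] using hw⟩ : Fin (d - 1)))
  · intro a ha; exact Finset.mem_univ _
  · intro w1 hw1 w2 hw2 he
    simp only [Finset.mem_filter, Finset.mem_univ, true_and] at hw1 hw2
    have hval := congrArg Fin.val he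
    exact Subtype.ext (child_inj_aux hR hw1 hw2 (Fin.ext hval))
  · intro j _
    have hjd : (j : ℕ) < d := by omega
    have hj' : u.1.depth = 0 ∨ ((⟨(j : ℕ), hjd⟩ : Fin d) : ℕ) < d - 1 :=
      Or.inr j.isLt
    refine ⟨⟨mkChild u.1 hR ⟨(j : ℕ), hjd⟩ hj', by rw [depth_mkChild]; omega⟩, ?_, ?_⟩
    · simp only [Finset.mem_filter, Finset.mem_univ, true_and]
      exact childOf_mkChild u.1 hR _ hj'
    · apply Fin.ext
      show ((mkChild u.1 hR ⟨(j : ℕ), hjd⟩ hj').1.2 ⟨u.1.depth, hR⟩ : ℕ) = (j : ℕ)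
      rw [entry_mkChild]

end TreeVertex
section AnalysisHelpers

lemma rpow_succ_half {c : ℝ} (hc : 0 < c) (t : ℝ) :
    c ^ (-(t + 1) / 2) = c ^ (-t / 2) / Real.sqrt c := by
  rw [show -(t + 1) / 2 = -t / 2 + -(1 / 2 : ℝ) by ring, Real.rpow_add hc,
    Real.rpow_neg hc.le, ← Real.sqrt_eq_rpow]
  ring

lemma rpow_pred_half {c : ℝ} (hc : 0 < c) (t : ℝ) :
    c ^ (-(t - 1) / 2) = c ^ (-t / 2) * Real.sqrt c := by
  rw [show -(t - 1) / 2 = -t / 2 + (1 / 2 : ℝ) by ring, Real.rpow_add hc,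
    ← Real.sqrt_eq_rpow]

lemma rec_helper {c : ℝ} (hc : 0 < c) (t α β : ℝ) :
    c * (c ^ (-(t + 1) / 2) * Real.sin (β - α)) + c ^ (-(t - 1) / 2) * Real.sin (β + α)
      = 2 * Real.sqrt c * Real.cos α * (c ^ (-t / 2) * Real.sin β) := by
  have hs0 : Real.sqrt c ≠ 0 := ne_of_gt (Real.sqrt_pos.mpr hc)
  have hs : Real.sqrt c * Real.sqrt c = c := Real.mul_self_sqrt hc.le
  rw [rpow_succ_half hc, rpow_pred_half hc, Real.sin_sub, Real.sin_add]
  field_simp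
  linear_combination (c ^ (-t / 2) * (Real.sin β * Real.cos α + Real.cos β * Real.sin α)
    - 2 * Real.cos α * (c ^ (-t / 2) * Real.sin β)
    - (Real.sin β * Real.cos α - Real.cos β * Real.sin α) * (1 - c ^ (-t / 2))) * hs

end AnalysisHelpers

/-- For `d ≥ 3`, `L ≥ 0` and `α ∈ (0, π)` satisfying the eigenvalue
condition `d·sin α·cos((L+1)α) + (d−2)·cos α·sin((L+1)α) = 0`, the azimuthally
symmetric vector `v(u) = (d−1)^{−n/2}·sin((L+1−n)·α)` (`n` the depth of `u`) on the
interior vertices is nonzero and satisfies `𝓛_D v = λ·v` with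
`λ = 1 − (2/d)·√(d−1)·cos α`. -/
theorem azimuthal_dirichlet_eigenvector (d L : ℕ) (hd : 3 ≤ d) (α : ℝ)
    (hα : α ∈ Set.Ioo 0 Real.pi)
    (hroot : (d : ℝ) * Real.sin α * Real.cos (((L : ℝ) + 1) * α)
        + ((d : ℝ) - 2) * Real.cos α * Real.sin (((L : ℝ) + 1) * α) = 0) :
    let v : Interior d (L + 1) → ℝ := fun u =>
      ((d : ℝ) - 1) ^ (-(u.1.depth : ℝ) / 2)
        * Real.sin (((L : ℝ) + 1 - (u.1.depth : ℝ)) * α)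
    v ≠ 0 ∧ (dirichletLaplacian d L).mulVec v
        = (1 - (2 / (d : ℝ)) * Real.sqrt ((d : ℝ) - 1) * Real.cos α) • v := by
  obtain ⟨hα0, hαπ⟩ := hα
  have hd0 : 0 < d := by omega
  have h3 : (3 : ℝ) ≤ (d : ℝ) := by exact_mod_cast hd
  have hdne : (d : ℝ) ≠ 0 := by linarith
  have hc : (0 : ℝ) < (d : ℝ) - 1 := by linarith
  have hs0 : Real.sqrt ((d : ℝ) - 1) ≠ 0 := ne_of_gt (Real.sqrt_pos.mpr hc)
  have hs : Real.sqrt ((d : ℝ) - 1) * Real.sqrt ((d : ℝ) - 1) = (d : ℝ) - 1 :=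
    Real.mul_self_sqrt hc.le
  have hsinα : 0 < Real.sin α := Real.sin_pos_of_pos_of_lt_pi hα0 hαπ
  intro v
  set G : ℕ → ℝ := fun m =>
    ((d : ℝ) - 1) ^ (-(m : ℝ) / 2) * Real.sin (((L : ℝ) + 1 - (m : ℝ)) * α) with hG
  have hvG : ∀ u : Interior d (L + 1), v u = G u.1.depth := fun u => rfl
  constructor
  · -- v ≠ 0
    intro hv0
    let u₀ : Interior d (L + 1) :=
      ⟨⟨(⟨L, by omega⟩, fun _ => ⟨0, hd0⟩), fun _ _ => rfl,
        fun i _ _ => show 0 < d - 1 by omega⟩, show L < L + 1 by omega⟩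
    have h0 : v u₀ = 0 := by rw [hv0]; rfl
    rw [hvG u₀] at h0
    have hdep : u₀.1.depth = L := rfl
    rw [hdep] at h0
    simp only [hG] at h0
    rw [show ((L : ℝ) + 1 - (L : ℝ)) * α = α by ring] at h0
    have hpos := mul_pos (Real.rpow_pos_of_pos hc (-(L : ℝ) / 2)) hsinα
    exact (ne_of_gt hpos) h0
  · -- eigenvector equation
    funext u
    have hnR : u.1.depth < L + 1 := u.2
    have hnL : u.1.depth ≤ L := by omega
    rw [Pi.smul_apply, smul_eq_mul]
    have step1 : ∀ w : Interior d (L + 1),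
        dirichletLaplacian d L u w * v w
          = (if w = u then v u else 0)
            + ((if ChildOf u.1 w.1 then v w else 0) * (-(1 / (d : ℝ)))
              + (if ChildOf w.1 u.1 then v w else 0) * (-(1 / (d : ℝ)))) := by
      intro w
      simp only [dirichletLaplacian]
      by_cases h1 : u = w
      · subst h1
        rw [if_pos rfl, if_pos rfl, if_neg (not_childOf_self u.1)]
        ring
      · rw [if_neg h1, if_neg (fun h : w = u => h1 h.symm)]
        by_cases h2 : ChildOf u.1 w.1
        · have h4 : ¬ ChildOf w.1 u.1 := fun h => by
            have a := h2.1; have b := h.1; omega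
          have hadj : Adj u.1 w.1 := Or.inl h2
          rw [if_pos hadj, if_pos h2, if_neg h4]
          ring
        · by_cases h4 : ChildOf w.1 u.1
          · have hadj : Adj u.1 w.1 := Or.inr h4
            rw [if_pos hadj, if_neg h2, if_pos h4]
            ring
          · have hadj : ¬ Adj u.1 w.1 := fun h => h.elim h2 h4
            rw [if_neg hadj, if_neg h2, if_neg h4]
            ring
    have expand : (dirichletLaplacian d L).mulVec v u
        = v u + ((∑ w ∈ Finset.univ.filter
              (fun w : Interior d (L + 1) => ChildOf u.1 w.1), v w) * (-(1 / (d : ℝ)))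
            + (∑ w ∈ Finset.univ.filter
              (fun w : Interior d (L + 1) => ChildOf w.1 u.1), v w) * (-(1 / (d : ℝ)))) := by
      rw [Matrix.mulVec, dotProduct]
      rw [Finset.sum_congr rfl (fun w _ => step1 w)]
      rw [Finset.sum_add_distrib, Finset.sum_add_distrib,
        Finset.sum_ite_eq' Finset.univ u (fun _ => v u), if_pos (Finset.mem_univ u),
        ← Finset.sum_mul, ← Finset.sum_mul, ← Finset.sum_filter, ← Finset.sum_filter]
    rw [expand, hvG u]
    -- parent sum
    rcases Nat.eq_zero_or_pos u.1.depth with h0 | h0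
    · -- depth 0 : no parent
      rw [parent_filter_eq_empty u h0, Finset.sum_empty]
      rcases eq_or_lt_of_le hnL with hL | hL
      · -- depth = L = 0 : no interior children either
        have hL0 : L = 0 := by omega
        rw [children_filter_eq_empty u (by omega), Finset.sum_empty]
        have hcos : Real.cos α = 0 := by
          rw [hL0] at hroot
          have h2 : (2 * (d : ℝ) - 2) * (Real.sin α * Real.cos α) = 0 := by
            rw [show ((0 : ℕ) : ℝ) + 1 = 1 by norm_num, one_mul] at hroot
            linear_combination hroot
          rcases mul_eq_zero.mp h2 with h | h
          · exfalso; linarith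
          · rcases mul_eq_zero.mp h with h' | h'
            · exact absurd h' (ne_of_gt hsinα)
            · exact h'
        have hkey : (0 : ℝ) + 0
            = 2 * Real.sqrt ((d : ℝ) - 1) * Real.cos α * G u.1.depth := by
          rw [hcos]; ring
        linear_combination (-(1 / (d : ℝ))) * hkey
      · -- depth = 0 < L
        have hSc : (∑ w ∈ Finset.univ.filter
            (fun w : Interior d (L + 1) => ChildOf u.1 w.1), v w)
            = (d : ℝ) * G (u.1.depth + 1) := by
          rw [Finset.sum_congr rfl (fun w hw => by
            rw [hvG w, (show w.1.depth = u.1.depth + 1 from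
              ((Finset.mem_filter.mp hw).2).1)]), Finset.sum_const,
            children_filter_card_root u h0 (by omega), nsmul_eq_mul]
        rw [hSc]
        have hkey : (d : ℝ) * G (u.1.depth + 1) + 0
            = 2 * Real.sqrt ((d : ℝ) - 1) * Real.cos α * G u.1.depth := by
          rw [h0]
          simp only [hG]
          rw [show ((0 : ℕ) + 1 : ℕ) = 1 from rfl, Nat.cast_one, Nat.cast_zero,
            show -(1 : ℝ) / 2 = -((0 : ℝ) + 1) / 2 by norm_num, rpow_succ_half hc,
            show -(0 : ℝ) / 2 = 0 by norm_num, Real.rpow_zero,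
            show ((L : ℝ) + 1 - 1) * α = (L : ℝ) * α by ring,
            show ((L : ℝ) + 1 - 0) * α = ((L : ℝ) + 1) * α by ring]
          have hd_eq : (d : ℝ) * Real.sin ((L : ℝ) * α)
              = 2 * ((d : ℝ) - 1) * Real.cos α * Real.sin (((L : ℝ) + 1) * α) := by
            rw [show (L : ℝ) * α = ((L : ℝ) + 1) * α - α by ring, Real.sin_sub]
            linear_combination (-1 : ℝ) * hroot
          field_simp
          linear_combination (norm := ring_nf) hd_eq - 2 * Real.cos α * Real.sin (((L : ℝ) + 1) * α) * hs
        linear_combination (-(1 / (d : ℝ))) * hkey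
    · -- depth ≥ 1 : unique parent
      rw [parent_filter_eq_singleton hd0 u h0, Finset.sum_singleton]
      have hSp : v ⟨mkParent hd0 u.1, by rw [depth_mkParent]; have := u.2; omega⟩
          = G (u.1.depth - 1) := by
        rw [hvG]; congr 1
      rw [hSp]
      rcases eq_or_lt_of_le hnL with hL | hL
      · -- depth = L ≥ 1 : children are leaves
        rw [children_filter_eq_empty u (by omega), Finset.sum_empty]
        have hkey : (0 : ℝ) + G (u.1.depth - 1)
            = 2 * Real.sqrt ((d : ℝ) - 1) * Real.cos α * G u.1.depth := by
          simp only [hG]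
          rw [Nat.cast_sub h0, Nat.cast_one]
          have hnLr : (u.1.depth : ℝ) = (L : ℝ) := by exact_mod_cast congrArg Nat.cast hL
          rw [hnLr,
            show ((L : ℝ) + 1 - ((L : ℝ) - 1)) * α = 2 * α by ring,
            show ((L : ℝ) + 1 - (L : ℝ)) * α = α by ring,
            rpow_pred_half hc, Real.sin_two_mul]
          ring
        linear_combination (-(1 / (d : ℝ))) * hkey
      · -- 1 ≤ depth < L : interior children
        have hSc : (∑ w ∈ Finset.univ.filter
            (fun w : Interior d (L + 1) => ChildOf u.1 w.1), v w)
            = ((d : ℝ) - 1) * G (u.1.depth + 1) := by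
          rw [Finset.sum_congr rfl (fun w hw => by
            rw [hvG w, (show w.1.depth = u.1.depth + 1 from
              ((Finset.mem_filter.mp hw).2).1)]), Finset.sum_const,
            children_filter_card u h0 (by omega), nsmul_eq_mul,
            Nat.cast_sub (by omega : 1 ≤ d), Nat.cast_one]
        rw [hSc]
        have hkey : ((d : ℝ) - 1) * G (u.1.depth + 1) + G (u.1.depth - 1)
            = 2 * Real.sqrt ((d : ℝ) - 1) * Real.cos α * G u.1.depth := by
          simp only [hG]
          rw [Nat.cast_sub h0, Nat.cast_add, Nat.cast_one,
            show ((L : ℝ) + 1 - ((u.1.depth : ℝ) + 1)) * α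
              = ((L : ℝ) + 1 - (u.1.depth : ℝ)) * α - α by ring,
            show ((L : ℝ) + 1 - ((u.1.depth : ℝ) - 1)) * α
              = ((L : ℝ) + 1 - (u.1.depth : ℝ)) * α + α by ring]
          exact rec_helper hc (u.1.depth : ℝ) α _
        linear_combination (-(1 / (d : ℝ))) * hkey
end

section
/- For integers d ≥ 3 and L ≥ 0, every eigenvalue λ of the Dirichlet Laplacian 𝓛_D of the finite d-regular tree of depth L+1 satisfies 1 − (2/d)·√(d−1) < λ < 1 + (2/d)·√(d−1); that is, all Dirichlet eigenvalues lie strictly outside the spectral gap of the infinite d-regular tree, in the band of its continuous spectrum. -/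
open scoped Classical

open TreeVertex

open TreeVertex Finset

namespace TreeProof

/-- Extensionality for tree vertices: equal depths and equal entries below the depth. -/
lemma tv_ext {d R : ℕ} {u v : TreeVertex d R} (h1 : u.depth = v.depth)
    (h2 : ∀ i : Fin R, i.1 < u.depth → u.1.2 i = v.1.2 i) : u = v := by
  apply Subtype.ext
  apply Prod.ext
  · exact Fin.ext h1
  · funext i
    by_cases h : i.1 < u.depth
    · exact h2 i h
    · apply Fin.ext
      simp only [TreeVertex.depth] at h h1
      have hu := u.2.1 i (by omega)
      have hv := v.2.1 i (by omega)
      omega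

/-- The parent of a vertex (the root is its own parent). -/
def par {d : ℕ} (hd : 0 < d) {R : ℕ} (v : TreeVertex d R) : TreeVertex d R :=
  ⟨(⟨v.1.1.1 - 1, by have := v.1.1.isLt; omega⟩,
     fun i => if i.1 + 1 < v.1.1.1 then v.1.2 i else ⟨0, hd⟩),
   fun i hi => by
     simp only at hi
     dsimp only
     rw [if_neg (by omega)],
   fun i h0 hi => by
     simp only at hi
     dsimp only
     rw [if_pos (by omega)]
     exact v.2.2 i h0 (by omega)⟩

lemma par_depth {d : ℕ} (hd : 0 < d) {R : ℕ} (v : TreeVertex d R) :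
    (par hd v).depth = v.depth - 1 := rfl

lemma par_snd {d : ℕ} (hd : 0 < d) {R : ℕ} (v : TreeVertex d R) (i : Fin R)
    (h : i.1 + 1 < v.depth) : (par hd v).1.2 i = v.1.2 i := if_pos h

lemma childOf_iff {d : ℕ} (hd : 0 < d) {R : ℕ} (u v : TreeVertex d R) :
    ChildOf u v ↔ v.depth = u.depth + 1 ∧ par hd v = u := by
  constructor
  · rintro ⟨hdep, hagree⟩
    refine ⟨hdep, tv_ext (by rw [par_depth]; omega) ?_⟩
    intro i hi
    rw [par_depth] at hi
    rw [par_snd hd v i (by omega)]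
    exact hagree i (by omega)
  · rintro ⟨hdep, rfl⟩
    exact ⟨hdep, fun i hi => (par_snd hd v i (by rw [par_depth] at hi hdep; omega)).symm⟩

lemma childOf_depth {d R : ℕ} {u v : TreeVertex d R} (h : ChildOf u v) :
    v.depth = u.depth + 1 := h.1

lemma not_childOf_self {d R : ℕ} (v : TreeVertex d R) : ¬ ChildOf v v := fun h => by
  have := h.1; omega

lemma not_adj_self {d R : ℕ} (v : TreeVertex d R) : ¬ Adj v v := fun h => by
  rcases h with h | h <;> exact not_childOf_self v h

end TreeProof

namespace TreeProof

variable {d L : ℕ}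

/-- Parent as an interior vertex. -/
def pI (hd : 0 < d) (v : Interior d (L + 1)) : Interior d (L + 1) :=
  ⟨par hd v.1, by have := v.2; rw [par_depth]; omega⟩

/-- The root as an interior vertex. -/
def rootI (hd : 0 < d) : Interior d (L + 1) :=
  ⟨root d (L + 1) hd, by simp [TreeVertex.depth, TreeVertex.root]⟩

lemma depth_le (v : Interior d (L + 1)) : v.1.depth ≤ L := by
  have := v.2; omega

lemma eq_rootI (hd : 0 < d) (v : Interior d (L + 1)) (h : v.1.depth = 0) : v = rootI hd := by
  apply Subtype.ext
  exact tv_ext (by rw [h]; rfl) (fun i hi => absurd hi (by omega))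

/-- The canonical (leftmost) child of an interior vertex of depth `< L`. -/
def chld (hd : 2 ≤ d) (v : Interior d (L + 1)) (hv : v.1.depth < L) : Interior d (L + 1) :=
  ⟨⟨(⟨v.1.1.1.1 + 1, by have h' : v.1.1.1.1 < L := hv; omega⟩, v.1.1.2),
    fun i hi => by
      simp only at hi
      exact v.1.2.1 i (by omega),
    fun i h0 hi => by
      simp only at hi
      by_cases hlt : i.1 < (v.1.1.1.1 : ℕ)
      · exact v.1.2.2 i h0 hlt
      · have h0' : ((v.1.1.2 i : Fin d) : ℕ) = 0 := v.1.2.1 i (by omega)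
        show ((v.1.1.2 i : Fin d) : ℕ) < d - 1
        omega⟩,
   by
     have h' : v.1.1.1.1 < L := hv
     show v.1.1.1.1 + 1 < L + 1
     omega⟩

lemma chld_depth (hd : 2 ≤ d) (v : Interior d (L + 1)) (hv : v.1.depth < L) :
    (chld hd v hv).1.depth = v.1.depth + 1 := rfl

lemma childOf_chld (hd : 2 ≤ d) (v : Interior d (L + 1)) (hv : v.1.depth < L) :
    ChildOf v.1 (chld hd v hv).1 :=
  ⟨rfl, fun i _ => rfl⟩

lemma chld_parent_unique (hd : 2 ≤ d) (v : Interior d (L + 1)) (hv : v.1.depth < L)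
    (u : Interior d (L + 1)) (h : ChildOf u.1 (chld hd v hv).1) : u = v := by
  apply Subtype.ext
  have hdep : (chld hd v hv).1.depth = u.1.depth + 1 := h.1
  rw [chld_depth] at hdep
  refine tv_ext (by omega) (fun i hi => ?_)
  rw [← h.2 i hi]
  rfl

end TreeProof

namespace TreeProof

variable {d L : ℕ}

set_option maxHeartbeats 1000000 in
lemma eigen {x : Interior d (L + 1) → ℝ} {lam : ℝ}
    (hx : (dirichletLaplacian d L).mulVec x = lam • x) (hd : 3 ≤ d)
    (v : Interior d (L + 1)) :
    ∑ u ∈ Finset.univ.filter (fun u : Interior d (L + 1) => Adj v.1 u.1), x u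
      = (d : ℝ) * (1 - lam) * x v := by
  have hv := congrFun hx v
  simp only [Matrix.mulVec, dotProduct, Pi.smul_apply, smul_eq_mul] at hv
  have hsplit : ∀ u : Interior d (L + 1),
      dirichletLaplacian d L v u * x u
        = (if v = u then x u else 0) + (if Adj v.1 u.1 then -(1 / (d : ℝ)) * x u else 0) := by
    intro u
    by_cases h1 : v = u
    · subst h1
      simp [dirichletLaplacian, not_adj_self]
    · simp only [dirichletLaplacian, if_neg h1]
      by_cases h2 : Adj v.1 u.1 <;> simp [h2]
  rw [Finset.sum_congr rfl fun u _ => hsplit u, Finset.sum_add_distrib,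
    Finset.sum_ite_eq Finset.univ v x, if_pos (Finset.mem_univ v)] at hv
  have h3 : ∑ u : Interior d (L + 1), (if Adj v.1 u.1 then -(1 / (d : ℝ)) * x u else 0)
      = -(1 / (d : ℝ)) * ∑ u ∈ Finset.univ.filter (fun u : Interior d (L + 1) => Adj v.1 u.1), x u := by
    rw [Finset.mul_sum, Finset.sum_filter]
  rw [h3] at hv
  have hd0 : (d : ℝ) ≠ 0 := by positivity
  have h6 : (1 / (d : ℝ)) * ∑ u ∈ Finset.univ.filter
      (fun u : Interior d (L + 1) => Adj v.1 u.1), x u = x v - lam * x v := by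
    linarith
  have h7 : ∑ u ∈ Finset.univ.filter (fun u : Interior d (L + 1) => Adj v.1 u.1), x u
      = (d : ℝ) * (x v - lam * x v) := by
    rw [← h6]
    field_simp
  rw [h7]
  ring

lemma adj_filter_split (w : Interior d (L + 1)) (x : Interior d (L + 1) → ℝ) :
    ∑ u ∈ Finset.univ.filter (fun u : Interior d (L + 1) => Adj w.1 u.1), x u
      = (∑ u ∈ Finset.univ.filter (fun u : Interior d (L + 1) => ChildOf w.1 u.1), x u)
        + ∑ u ∈ Finset.univ.filter (fun u : Interior d (L + 1) => ChildOf u.1 w.1), x u := by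
  have hfe : Finset.univ.filter (fun u : Interior d (L + 1) => Adj w.1 u.1)
      = Finset.univ.filter (fun u : Interior d (L + 1) => ChildOf w.1 u.1)
        ∪ Finset.univ.filter (fun u : Interior d (L + 1) => ChildOf u.1 w.1) := by
    rw [← Finset.filter_or]
    exact Finset.filter_congr fun u _ => Iff.rfl
  rw [hfe, Finset.sum_union]
  rw [Finset.disjoint_filter]
  intro u _ h1 h2
  have := h1.1
  have := h2.1
  omega

/-- The filter of vertices of which `v` is a child: `{pI v}` if `v` is not the root, else `∅`. -/
lemma parent_filter (hd : 0 < d) (v : Interior d (L + 1)) :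
    Finset.univ.filter (fun u : Interior d (L + 1) => ChildOf u.1 v.1)
      = if 1 ≤ v.1.depth then {pI hd v} else ∅ := by
  ext u
  simp only [Finset.mem_filter, Finset.mem_univ, true_and]
  split
  · rename_i hv
    simp only [Finset.mem_singleton]
    constructor
    · intro hc
      have h := (childOf_iff hd u.1 v.1).mp hc
      exact Subtype.ext h.2.symm
    · rintro rfl
      exact (childOf_iff hd (pI hd v).1 v.1).mpr ⟨by rw [show (pI hd v).1 = par hd v.1 from rfl, par_depth]; omega, rfl⟩
  · rename_i hv
    simp only [Finset.notMem_empty, iff_false]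
    intro hc
    have := hc.1
    omega

/-- If the eigenvector vanishes at every vertex of depth `L`, it vanishes everywhere. -/
lemma exists_deep {x : Interior d (L + 1) → ℝ} {lam : ℝ}
    (hx : (dirichletLaplacian d L).mulVec x = lam • x) (hd : 3 ≤ d) (hx0 : x ≠ 0) :
    ∃ v : Interior d (L + 1), v.1.depth = L ∧ x v ≠ 0 := by
  by_contra hcon
  push_neg at hcon
  apply hx0
  suffices H : ∀ k, ∀ v : Interior d (L + 1), L ≤ v.1.depth + k → x v = 0 by
    exact funext fun v => H L v (by omega)
  intro k
  induction k with
  | zero => exact fun v hv => hcon v (by have := depth_le v; omega)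
  | succ k ih =>
    intro v hv
    by_cases hk : L ≤ v.1.depth + k
    · exact ih v hk
    · have hvL : v.1.depth < L := by omega
      have hd2 : 2 ≤ d := by omega
      set w := chld hd2 v hvL with hw
      have hwd : w.1.depth = v.1.depth + 1 := chld_depth hd2 v hvL
      have hw0 : x w = 0 := ih w (by omega)
      have he := eigen hx hd w
      rw [adj_filter_split, hw0, mul_zero] at he
      have hsum1 : ∑ u ∈ Finset.univ.filter
          (fun u : Interior d (L + 1) => ChildOf w.1 u.1), x u = 0 := by
        apply Finset.sum_eq_zero
        intro u hu
        have hu' := (Finset.mem_filter.mp hu).2.1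
        exact ih u (by omega)
      have hfilter : Finset.univ.filter
          (fun u : Interior d (L + 1) => ChildOf u.1 w.1) = {v} := by
        ext u
        simp only [Finset.mem_filter, Finset.mem_univ, true_and, Finset.mem_singleton]
        exact ⟨fun h => chld_parent_unique hd2 v hvL u h,
          fun h => h ▸ childOf_chld hd2 v hvL⟩
      rw [hsum1, hfilter, Finset.sum_singleton] at he
      linarith

end TreeProof

namespace TreeProof

variable {d L : ℕ}

lemma quad_eq (hd : 3 ≤ d) (hd0 : 0 < d) {x : Interior d (L + 1) → ℝ} {lam : ℝ}
    (hx : (dirichletLaplacian d L).mulVec x = lam • x) :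
    (d : ℝ) * (1 - lam) * (∑ v : Interior d (L + 1), x v ^ 2)
      = 2 * ∑ v ∈ Finset.univ.filter (fun v : Interior d (L + 1) => 1 ≤ v.1.depth),
          x (pI hd0 v) * x v := by
  have hA : ∀ u : Interior d (L + 1),
      (∑ v ∈ Finset.univ.filter (fun v : Interior d (L + 1) => ChildOf v.1 u.1), x v)
        = if 1 ≤ u.1.depth then x (pI hd0 u) else 0 := by
    intro u
    rw [parent_filter hd0 u]
    split
    · rw [Finset.sum_singleton]
    · rw [Finset.sum_empty]
  have hL : ∑ v : Interior d (L + 1),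
      x v * (∑ u ∈ Finset.univ.filter (fun u : Interior d (L + 1) => Adj v.1 u.1), x u)
        = (d : ℝ) * (1 - lam) * ∑ v : Interior d (L + 1), x v ^ 2 := by
    rw [Finset.sum_congr rfl fun v _ => by rw [eigen hx hd v], Finset.mul_sum]
    exact Finset.sum_congr rfl fun v _ => by ring
  have hB : ∑ v : Interior d (L + 1),
      x v * ∑ u ∈ Finset.univ.filter (fun u : Interior d (L + 1) => ChildOf u.1 v.1), x u
        = ∑ v ∈ Finset.univ.filter (fun v : Interior d (L + 1) => 1 ≤ v.1.depth),
            x (pI hd0 v) * x v := by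
    rw [Finset.sum_filter]
    refine Finset.sum_congr rfl fun v _ => ?_
    rw [hA v]
    split <;> ring
  have hC : ∑ v : Interior d (L + 1),
      x v * ∑ u ∈ Finset.univ.filter (fun u : Interior d (L + 1) => ChildOf v.1 u.1), x u
        = ∑ v ∈ Finset.univ.filter (fun v : Interior d (L + 1) => 1 ≤ v.1.depth),
            x (pI hd0 v) * x v := by
    have hmul : ∀ v : Interior d (L + 1),
        x v * ∑ u ∈ Finset.univ.filter (fun u : Interior d (L + 1) => ChildOf v.1 u.1), x u
          = ∑ u : Interior d (L + 1), if ChildOf v.1 u.1 then x v * x u else 0 := by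
      intro v
      rw [Finset.mul_sum, Finset.sum_filter]
    rw [Finset.sum_congr rfl fun v _ => hmul v, Finset.sum_comm, Finset.sum_filter]
    refine Finset.sum_congr rfl fun u _ => ?_
    rw [← Finset.sum_filter (fun v : Interior d (L + 1) => ChildOf v.1 u.1)
          (fun v => x v * x u), parent_filter hd0 u]
    split
    · rw [Finset.sum_singleton]
    · rw [Finset.sum_empty]
  calc (d : ℝ) * (1 - lam) * (∑ v : Interior d (L + 1), x v ^ 2)
      = ∑ v : Interior d (L + 1),
          x v * (∑ u ∈ Finset.univ.filter (fun u : Interior d (L + 1) => Adj v.1 u.1), x u) :=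
        hL.symm
    _ = (∑ v : Interior d (L + 1),
          x v * ∑ u ∈ Finset.univ.filter (fun u : Interior d (L + 1) => ChildOf v.1 u.1), x u)
        + ∑ v : Interior d (L + 1),
          x v * ∑ u ∈ Finset.univ.filter (fun u : Interior d (L + 1) => ChildOf u.1 v.1), x u := by
        rw [← Finset.sum_add_distrib]
        exact Finset.sum_congr rfl fun v _ => by rw [adj_filter_split v x, mul_add]
    _ = 2 * ∑ v ∈ Finset.univ.filter (fun v : Interior d (L + 1) => 1 ≤ v.1.depth),
          x (pI hd0 v) * x v := by rw [hB, hC]; ring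

/-- The fiber of the parent map over `w`. -/
def fib (hd0 : 0 < d) (w : Interior d (L + 1)) : Finset (Interior d (L + 1)) :=
  (Finset.univ.filter (fun v : Interior d (L + 1) => 1 ≤ v.1.depth)).filter
    (fun u => pI hd0 u = w)

lemma fib_depth {hd0 : 0 < d} {w u : Interior d (L + 1)} (hu : u ∈ fib hd0 w) :
    u.1.depth = w.1.depth + 1 := by
  simp only [fib, Finset.mem_filter, Finset.mem_univ, true_and] at hu
  obtain ⟨h1, h2⟩ := hu
  have h3 : (pI hd0 u).1.depth = w.1.depth := by rw [h2]
  rw [show (pI hd0 u).1 = par hd0 u.1 from rfl, par_depth] at h3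
  omega

lemma fib_entry {hd0 : 0 < d} {w u : Interior d (L + 1)} (hu : u ∈ fib hd0 w)
    {i : Fin (L + 1)} (hi : i.1 < w.1.depth) : u.1.1.2 i = w.1.1.2 i := by
  have hdep := fib_depth hu
  simp only [fib, Finset.mem_filter, Finset.mem_univ, true_and] at hu
  have h2 : (pI hd0 u).1 = w.1 := by rw [hu.2]
  rw [show (pI hd0 u).1 = par hd0 u.1 from rfl] at h2
  rw [← h2, par_snd hd0 u.1 i (by omega)]

lemma fib_inj (hd0 : 0 < d) (w : Interior d (L + 1)) :
    Set.InjOn (fun u : Interior d (L + 1) => (u.1.1.2 ⟨w.1.depth, w.2⟩ : ℕ))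
      (fib hd0 w) := by
  intro u1 h1 u2 h2 heq
  have hd1 := fib_depth h1
  have hd2 := fib_depth h2
  apply Subtype.ext
  refine tv_ext (by omega) fun i hi => ?_
  by_cases hlt : i.1 < w.1.depth
  · rw [fib_entry h1 hlt, fib_entry h2 hlt]
  · have hieq : (i : ℕ) = w.1.depth := by omega
    have hieq' : i = ⟨w.1.depth, w.2⟩ := Fin.ext hieq
    rw [hieq']
    exact Fin.ext heq

lemma card_fib_le (hd0 : 0 < d) (w : Interior d (L + 1)) (hw : 1 ≤ w.1.depth) :
    (fib hd0 w).card ≤ d - 1 := by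
  have h := Finset.card_le_card_of_injOn
    (f := fun u : Interior d (L + 1) => (u.1.1.2 ⟨w.1.depth, w.2⟩ : ℕ))
    (t := Finset.range (d - 1)) ?_ (fib_inj hd0 w)
  · simpa using h
  · intro u hu
    rw [Finset.mem_coe, Finset.mem_range]
    exact u.1.2.2 ⟨w.1.depth, w.2⟩ hw (by show w.1.depth < u.1.depth; have := fib_depth (Finset.mem_coe.mp hu); omega)

lemma card_fib_le' (hd0 : 0 < d) (w : Interior d (L + 1)) : (fib hd0 w).card ≤ d := by
  have h := Finset.card_le_card_of_injOn
    (f := fun u : Interior d (L + 1) => (u.1.1.2 ⟨w.1.depth, w.2⟩ : ℕ))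
    (t := Finset.range d) ?_ (fib_inj hd0 w)
  · simpa using h
  · intro u hu
    rw [Finset.mem_coe, Finset.mem_range]
    exact (u.1.1.2 _).isLt

lemma fib_eq_empty (hd0 : 0 < d) (w : Interior d (L + 1)) (hw : w.1.depth = L) :
    fib hd0 w = ∅ := by
  apply Finset.eq_empty_of_forall_notMem
  intro u hu
  have := fib_depth hu
  have := depth_le u
  omega

lemma rootI_depth (hd0 : 0 < d) : (rootI (L := L) hd0).1.depth = 0 := rfl

end TreeProof

namespace TreeProof

variable {d L : ℕ}

set_option maxHeartbeats 2000000 in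
lemma main_bound (hd : 3 ≤ d) {x : Interior d (L + 1) → ℝ} {lam : ℝ}
    (hx : (dirichletLaplacian d L).mulVec x = lam • x) (hxne : x ≠ 0) :
    |(d : ℝ) * (1 - lam)| < 2 * Real.sqrt ((d : ℝ) - 1) := by
  have hd0 : 0 < d := by omega
  have hdR : (3 : ℝ) ≤ (d : ℝ) := by exact_mod_cast hd
  have hs2 : Real.sqrt ((d : ℝ) - 1) ^ 2 = (d : ℝ) - 1 := Real.sq_sqrt (by linarith)
  have hspos : 0 < Real.sqrt ((d : ℝ) - 1) := Real.sqrt_pos.mpr (by linarith)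
  have hQpos : 0 < ∑ v : Interior d (L + 1), x v ^ 2 := by
    obtain ⟨v, hv⟩ := Function.ne_iff.mp hxne
    exact Finset.sum_pos' (fun i _ => sq_nonneg _)
      ⟨v, Finset.mem_univ v,
        lt_of_le_of_ne (sq_nonneg _) (Ne.symm (pow_ne_zero 2 (by simpa using hv)))⟩
  have hquad := quad_eq hd hd0 hx
  set s : ℝ := Real.sqrt ((d : ℝ) - 1) with hsdef
  rcases Nat.eq_zero_or_pos L with hL | hL
  · -- L = 0 : no non-root vertices, so the quadratic form vanishes
    have hNRe : Finset.univ.filter (fun v : Interior d (L + 1) => 1 ≤ v.1.depth) = ∅ := by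
      apply Finset.filter_eq_empty_iff.mpr
      intro v _
      have := depth_le v
      omega
    rw [hNRe, Finset.sum_empty, mul_zero] at hquad
    have hmu : (d : ℝ) * (1 - lam) = 0 := by
      rcases mul_eq_zero.mp hquad with h | h
      · exact h
      · exact absurd h (ne_of_gt hQpos)
    rw [hmu, abs_zero]
    positivity
  · -- L ≥ 1
    obtain ⟨v₀, hv₀L, hv₀⟩ := exists_deep hx hd hxne
    have hv₀NR : v₀ ∈ Finset.univ.filter (fun v : Interior d (L + 1) => 1 ≤ v.1.depth) := by
      simp only [Finset.mem_filter, Finset.mem_univ, true_and]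
      omega
    have hrootfil : Finset.univ.filter (fun v : Interior d (L + 1) => ¬ 1 ≤ v.1.depth)
        = {rootI (L := L) hd0} := by
      ext v
      simp only [Finset.mem_filter, Finset.mem_univ, true_and, Finset.mem_singleton]
      constructor
      · intro hv
        exact eq_rootI (L := L) hd0 v (by omega)
      · rintro rfl
        rw [rootI_depth]
        omega
    -- Cauchy–Schwarz-type bound on the cross term
    have hterm : ∀ v ∈ Finset.univ.filter (fun v : Interior d (L + 1) => 1 ≤ v.1.depth),
        2 * s * |x (pI hd0 v) * x v| ≤ s ^ 2 * x v ^ 2 + x (pI hd0 v) ^ 2 := by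
      intro v _
      rw [abs_mul]
      nlinarith [sq_nonneg (s * |x v| - |x (pI hd0 v)|), sq_abs (x v), sq_abs (x (pI hd0 v)),
        abs_nonneg (x v), abs_nonneg (x (pI hd0 v)), hspos.le]
    have ha : 2 * s * |∑ v ∈ Finset.univ.filter (fun v : Interior d (L + 1) => 1 ≤ v.1.depth),
          x (pI hd0 v) * x v|
        ≤ s ^ 2 * (∑ v ∈ Finset.univ.filter (fun v : Interior d (L + 1) => 1 ≤ v.1.depth), x v ^ 2)
          + ∑ v ∈ Finset.univ.filter (fun v : Interior d (L + 1) => 1 ≤ v.1.depth),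
              x (pI hd0 v) ^ 2 := by
      calc 2 * s * |∑ v ∈ Finset.univ.filter (fun v : Interior d (L + 1) => 1 ≤ v.1.depth),
            x (pI hd0 v) * x v|
          ≤ 2 * s * ∑ v ∈ Finset.univ.filter (fun v : Interior d (L + 1) => 1 ≤ v.1.depth),
              |x (pI hd0 v) * x v| := by
            apply mul_le_mul_of_nonneg_left (Finset.abs_sum_le_sum_abs _ _) (by positivity)
        _ = ∑ v ∈ Finset.univ.filter (fun v : Interior d (L + 1) => 1 ≤ v.1.depth),
              2 * s * |x (pI hd0 v) * x v| := Finset.mul_sum _ _ _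
        _ ≤ ∑ v ∈ Finset.univ.filter (fun v : Interior d (L + 1) => 1 ≤ v.1.depth),
              (s ^ 2 * x v ^ 2 + x (pI hd0 v) ^ 2) := Finset.sum_le_sum hterm
        _ = _ := by rw [Finset.sum_add_distrib, Finset.mul_sum]
    -- fiberwise decomposition of the parent-square sum
    have hfibsum : ∑ w : Interior d (L + 1),
        ∑ u ∈ (Finset.univ.filter (fun v : Interior d (L + 1) => 1 ≤ v.1.depth)).filter
            (fun u => pI hd0 u = w), x (pI hd0 u) ^ 2
        = ∑ u ∈ Finset.univ.filter (fun v : Interior d (L + 1) => 1 ≤ v.1.depth),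
            x (pI hd0 u) ^ 2 :=
      Finset.sum_fiberwise_of_maps_to (fun u _ => Finset.mem_univ _) _
    have hinner : ∀ w : Interior d (L + 1),
        ∑ u ∈ (Finset.univ.filter (fun v : Interior d (L + 1) => 1 ≤ v.1.depth)).filter
            (fun u => pI hd0 u = w), x (pI hd0 u) ^ 2
          = ((fib hd0 w).card : ℝ) * x w ^ 2 := by
      intro w
      rw [Finset.sum_congr rfl (fun u hu => by rw [(Finset.mem_filter.mp hu).2]),
        Finset.sum_const, nsmul_eq_mul]
      rfl
    have hPfib : ∑ u ∈ Finset.univ.filter (fun v : Interior d (L + 1) => 1 ≤ v.1.depth),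
          x (pI hd0 u) ^ 2
        = ∑ w : Interior d (L + 1), ((fib hd0 w).card : ℝ) * x w ^ 2 := by
      rw [← hfibsum]
      exact Finset.sum_congr rfl fun w _ => hinner w
    -- bound the fiber cardinalities
    have hrootle : ((fib hd0 (rootI (L := L) hd0)).card : ℝ) * x (rootI (L := L) hd0) ^ 2
        ≤ (d : ℝ) * x (rootI (L := L) hd0) ^ 2 := by
      have hcc : ((fib hd0 (rootI (L := L) hd0)).card : ℝ) ≤ (d : ℝ) := by
        exact_mod_cast card_fib_le' hd0 (rootI (L := L) hd0)
      exact mul_le_mul_of_nonneg_right hcc (sq_nonneg _)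
    have hNRle : ∑ w ∈ Finset.univ.filter (fun v : Interior d (L + 1) => 1 ≤ v.1.depth),
          ((fib hd0 w).card : ℝ) * x w ^ 2
        ≤ ((d : ℝ) - 1)
          * ((∑ v ∈ Finset.univ.filter (fun v : Interior d (L + 1) => 1 ≤ v.1.depth), x v ^ 2)
              - x v₀ ^ 2) := by
      have hzero : ((fib hd0 v₀).card : ℝ) * x v₀ ^ 2 = 0 := by
        rw [fib_eq_empty hd0 v₀ hv₀L]
        simp
      have herase := Finset.sum_erase
        (f := fun w : Interior d (L + 1) => ((fib hd0 w).card : ℝ) * x w ^ 2)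
        (s := Finset.univ.filter (fun v : Interior d (L + 1) => 1 ≤ v.1.depth))
        (a := v₀) hzero
      rw [← herase]
      calc ∑ w ∈ (Finset.univ.filter (fun v : Interior d (L + 1) => 1 ≤ v.1.depth)).erase v₀,
            ((fib hd0 w).card : ℝ) * x w ^ 2
          ≤ ∑ w ∈ (Finset.univ.filter (fun v : Interior d (L + 1) => 1 ≤ v.1.depth)).erase v₀,
              ((d : ℝ) - 1) * x w ^ 2 := by
            apply Finset.sum_le_sum
            intro w hw
            apply mul_le_mul_of_nonneg_right _ (sq_nonneg _)
            have hw1 : 1 ≤ w.1.depth :=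
              (Finset.mem_filter.mp (Finset.mem_of_mem_erase hw)).2
            have hc := card_fib_le hd0 w hw1
            have hc' : ((fib hd0 w).card : ℝ) ≤ ((d - 1 : ℕ) : ℝ) := Nat.cast_le.mpr hc
            rwa [Nat.cast_sub (by omega), Nat.cast_one] at hc'
        _ = ((d : ℝ) - 1) * ∑ w ∈ (Finset.univ.filter
              (fun v : Interior d (L + 1) => 1 ≤ v.1.depth)).erase v₀, x w ^ 2 :=
            (Finset.mul_sum _ _ _).symm
        _ = _ := by rw [Finset.sum_erase_eq_sub hv₀NR]
    -- split the full square sum at the root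
    have hQB : ∑ v : Interior d (L + 1), x v ^ 2
        = (∑ v ∈ Finset.univ.filter (fun v : Interior d (L + 1) => 1 ≤ v.1.depth), x v ^ 2)
          + x (rootI (L := L) hd0) ^ 2 := by
      rw [← Finset.sum_filter_add_sum_filter_not Finset.univ
        (fun v : Interior d (L + 1) => 1 ≤ v.1.depth) (fun v => x v ^ 2), hrootfil,
        Finset.sum_singleton]
    have hCle : ∑ u ∈ Finset.univ.filter (fun v : Interior d (L + 1) => 1 ≤ v.1.depth),
          x (pI hd0 u) ^ 2
        ≤ ((d : ℝ) - 1)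
            * ((∑ v ∈ Finset.univ.filter (fun v : Interior d (L + 1) => 1 ≤ v.1.depth), x v ^ 2)
                - x v₀ ^ 2)
          + (d : ℝ) * x (rootI (L := L) hd0) ^ 2 := by
      rw [hPfib, ← Finset.sum_filter_add_sum_filter_not Finset.univ
        (fun v : Interior d (L + 1) => 1 ≤ v.1.depth)
        (fun w => ((fib hd0 w).card : ℝ) * x w ^ 2), hrootfil, Finset.sum_singleton]
      linarith [hrootle, hNRle]
    -- relate |2T| to |μ| Q
    have habs2T : 2 * |∑ v ∈ Finset.univ.filter (fun v : Interior d (L + 1) => 1 ≤ v.1.depth),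
          x (pI hd0 v) * x v|
        = |(d : ℝ) * (1 - lam)| * ∑ v : Interior d (L + 1), x v ^ 2 := by
      have h1 : |2 * ∑ v ∈ Finset.univ.filter (fun v : Interior d (L + 1) => 1 ≤ v.1.depth),
            x (pI hd0 v) * x v|
          = 2 * |∑ v ∈ Finset.univ.filter (fun v : Interior d (L + 1) => 1 ≤ v.1.depth),
              x (pI hd0 v) * x v| := by
        rw [abs_mul]
        norm_num
      rw [← h1, ← hquad, abs_mul, abs_of_pos hQpos]
    have hv₀sq : 0 < x v₀ ^ 2 := by positivity
    -- final arithmetic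
    have hbig : s * (|(d : ℝ) * (1 - lam)| * ∑ v : Interior d (L + 1), x v ^ 2)
        < s * (2 * s * ∑ v : Interior d (L + 1), x v ^ 2) := by
      calc s * (|(d : ℝ) * (1 - lam)| * ∑ v : Interior d (L + 1), x v ^ 2)
          = 2 * s * |∑ v ∈ Finset.univ.filter (fun v : Interior d (L + 1) => 1 ≤ v.1.depth),
              x (pI hd0 v) * x v| := by rw [← habs2T]; ring
        _ ≤ s ^ 2 * (∑ v ∈ Finset.univ.filter
              (fun v : Interior d (L + 1) => 1 ≤ v.1.depth), x v ^ 2)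
            + ∑ v ∈ Finset.univ.filter (fun v : Interior d (L + 1) => 1 ≤ v.1.depth),
                x (pI hd0 v) ^ 2 := ha
        _ ≤ s ^ 2 * (∑ v ∈ Finset.univ.filter
              (fun v : Interior d (L + 1) => 1 ≤ v.1.depth), x v ^ 2)
            + (((d : ℝ) - 1)
                * ((∑ v ∈ Finset.univ.filter
                    (fun v : Interior d (L + 1) => 1 ≤ v.1.depth), x v ^ 2) - x v₀ ^ 2)
              + (d : ℝ) * x (rootI (L := L) hd0) ^ 2) := by linarith [hCle]
        _ = 2 * ((d : ℝ) - 1) * (∑ v : Interior d (L + 1), x v ^ 2)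
            - ((d : ℝ) - 2) * x (rootI (L := L) hd0) ^ 2 - ((d : ℝ) - 1) * x v₀ ^ 2 := by
            rw [hs2, hQB]; ring
        _ ≤ 2 * ((d : ℝ) - 1) * (∑ v : Interior d (L + 1), x v ^ 2)
            - ((d : ℝ) - 1) * x v₀ ^ 2 := by
            have := mul_nonneg (show (0:ℝ) ≤ (d : ℝ) - 2 by linarith) (sq_nonneg (x (rootI (L := L) hd0)))
            linarith
        _ < 2 * ((d : ℝ) - 1) * (∑ v : Interior d (L + 1), x v ^ 2) := by
            have := mul_pos (show (0:ℝ) < (d : ℝ) - 1 by linarith) hv₀sq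
            linarith
        _ = s * (2 * s * ∑ v : Interior d (L + 1), x v ^ 2) := by rw [← hs2]; ring
    have h2 : |(d : ℝ) * (1 - lam)| * ∑ v : Interior d (L + 1), x v ^ 2
        < 2 * s * ∑ v : Interior d (L + 1), x v ^ 2 := (mul_lt_mul_iff_right₀ hspos).mp hbig
    exact (mul_lt_mul_iff_left₀ hQpos).mp h2


end TreeProof

/-- For integers `d ≥ 3` and `L ≥ 0`, every eigenvalue `λ` of the
Dirichlet Laplacian `𝓛_D` of the finite `d`-regular tree of depth `L+1` satisfies
`1 − (2/d)·√(d−1) < λ < 1 + (2/d)·√(d−1)`: all Dirichlet eigenvalues lie strictly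
inside the band of the continuous spectrum of the infinite `d`-regular tree. -/
theorem dirichlet_eigenvalues_in_continuous_band (d L : ℕ) (hd : 3 ≤ d) (lam : ℝ)
    (h : ∃ x : Interior d (L + 1) → ℝ, x ≠ 0 ∧ (dirichletLaplacian d L).mulVec x = lam • x) :
    1 - (2 / (d : ℝ)) * Real.sqrt ((d : ℝ) - 1) < lam ∧
      lam < 1 + (2 / (d : ℝ)) * Real.sqrt ((d : ℝ) - 1) := by
  obtain ⟨x, hxne, hx⟩ := h
  have hb := TreeProof.main_bound hd hx hxne
  have hdR : (3 : ℝ) ≤ (d : ℝ) := by exact_mod_cast hd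
  have hdpos : (0 : ℝ) < (d : ℝ) := by linarith
  have habs2 : (d : ℝ) * |1 - lam| < 2 * Real.sqrt ((d : ℝ) - 1) := by
    rwa [abs_mul, abs_of_pos hdpos] at hb
  have h1 : |1 - lam| < 2 * Real.sqrt ((d : ℝ) - 1) / (d : ℝ) := by
    rw [lt_div_iff₀ hdpos]
    linarith
  obtain ⟨hlo, hhi⟩ := abs_lt.mp h1
  have hring : (2 / (d : ℝ)) * Real.sqrt ((d : ℝ) - 1)
      = 2 * Real.sqrt ((d : ℝ) - 1) / (d : ℝ) := by ring
  constructor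
  · linarith
  · linarith
end

section
/- For integers d ≥ 3 and L ≥ 0, let α_L denote the smallest solution in (0, π) of the equation d·sin α·cos((L+1)·α) + (d−2)·cos α·sin((L+1)·α) = 0. Then α_L → 0 as L → ∞, and consequently the corresponding eigenvalues 1 − (2/d)·√(d−1)·cos(α_L) converge to 1 − (2/d)·√(d−1) as L → ∞. -/
open Real Filter Set

/-- For integers `d ≥ 3` and `L ≥ 0`, let `α_L` be the smallest
solution in `(0, π)` of `d·sin α·cos((L+1)α) + (d−2)·cos α·sin((L+1)α) = 0`.
Then `α_L → 0` as `L → ∞`, and the corresponding eigenvalues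
`1 − (2/d)·√(d−1)·cos α_L` converge to `1 − (2/d)·√(d−1)`. -/
theorem smallest_solution_tendsto_zero (d : ℕ) (hd : 3 ≤ d) :
    let αL : ℕ → ℝ := fun L =>
      sInf {α : ℝ | α ∈ Set.Ioo 0 Real.pi ∧
        (d : ℝ) * Real.sin α * Real.cos (((L : ℝ) + 1) * α)
          + ((d : ℝ) - 2) * Real.cos α * Real.sin (((L : ℝ) + 1) * α) = 0}
    Filter.Tendsto αL Filter.atTop (nhds 0) ∧
    Filter.Tendsto
      (fun L : ℕ => 1 - (2 / (d : ℝ)) * Real.sqrt ((d : ℝ) - 1) * Real.cos (αL L))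
      Filter.atTop
      (nhds (1 - (2 / (d : ℝ)) * Real.sqrt ((d : ℝ) - 1))) := by
  intro αL
  have hπ := Real.pi_pos
  have hd3 : (3:ℝ) ≤ (d:ℝ) := by exact_mod_cast hd
  have key : ∀ L : ℕ, 1 ≤ L → 0 ≤ αL L ∧ αL L ≤ Real.pi / ((L:ℝ) + 1) := by
    intro L hL
    have hL1 : (2:ℝ) ≤ (L:ℝ) + 1 := by
      have : (1:ℝ) ≤ (L:ℝ) := by exact_mod_cast hL
      linarith
    have hL0 : (0:ℝ) < (L:ℝ) + 1 := by linarith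
    set f : ℝ → ℝ := fun α =>
      (d : ℝ) * Real.sin α * Real.cos (((L : ℝ) + 1) * α)
        + ((d : ℝ) - 2) * Real.cos α * Real.sin (((L : ℝ) + 1) * α) with hf
    set S := {α : ℝ | α ∈ Set.Ioo 0 Real.pi ∧ f α = 0} with hS
    set a := Real.pi / (2 * ((L:ℝ) + 1)) with ha
    set b := Real.pi / ((L:ℝ) + 1) with hb
    have hapos : 0 < a := by positivity
    have hbpos : 0 < b := by positivity
    have hab : a < b := by
      rw [ha, hb]
      apply div_lt_div_of_pos_left hπ hL0
      linarith
    have hbhalf : b ≤ Real.pi / 2 := by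
      rw [hb]
      apply div_le_div_of_nonneg_left hπ.le (by norm_num) hL1
    have hahalf : a < Real.pi / 2 := lt_of_lt_of_le hab hbhalf
    -- f a > 0
    have hfa : 0 < f a := by
      have h1 : ((L:ℝ) + 1) * a = Real.pi / 2 := by
        rw [ha]; field_simp
      have hcosa : 0 < Real.cos a :=
        Real.cos_pos_of_mem_Ioo ⟨by linarith, hahalf⟩
      simp only [hf, h1, Real.cos_pi_div_two, Real.sin_pi_div_two]
      have : (1:ℝ) ≤ (d:ℝ) - 2 := by linarith
      nlinarith
    -- f b < 0
    have hfb : f b < 0 := by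
      have h1 : ((L:ℝ) + 1) * b = Real.pi := by
        rw [hb]; field_simp
      have hsinb : 0 < Real.sin b :=
        Real.sin_pos_of_pos_of_lt_pi hbpos (lt_of_le_of_lt hbhalf (by linarith))
      simp only [hf, h1, Real.cos_pi, Real.sin_pi]
      nlinarith
    have hcont : ContinuousOn f (Set.Icc a b) := by
      apply Continuous.continuousOn
      fun_prop
    have h0 : (0:ℝ) ∈ Set.Ioo (f b) (f a) := ⟨hfb, hfa⟩
    obtain ⟨c, hc, hfc⟩ := intermediate_value_Ioo' hab.le hcont h0
    have hcS : c ∈ S := by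
      refine ⟨⟨lt_trans hapos hc.1, ?_⟩, hfc⟩
      calc c < b := hc.2
        _ ≤ Real.pi / 2 := hbhalf
        _ < Real.pi := by linarith
    have hbdd : BddBelow S := ⟨0, fun x hx => le_of_lt hx.1.1⟩
    have hne : S.Nonempty := ⟨c, hcS⟩
    constructor
    · exact le_csInf hne (fun x hx => le_of_lt hx.1.1)
    · calc sInf S ≤ c := csInf_le hbdd hcS
        _ ≤ b := hc.2.le
  have hbound : Tendsto (fun L : ℕ => Real.pi / ((L:ℝ) + 1)) atTop (nhds 0) := by
    apply Tendsto.div_atTop tendsto_const_nhds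
    exact tendsto_atTop_add_const_right _ 1 tendsto_natCast_atTop_atTop
  have h1 : Tendsto αL atTop (nhds 0) := by
    apply tendsto_of_tendsto_of_tendsto_of_le_of_le' tendsto_const_nhds hbound
    · exact eventually_atTop.2 ⟨1, fun L hL => (key L hL).1⟩
    · exact eventually_atTop.2 ⟨1, fun L hL => (key L hL).2⟩
  refine ⟨h1, ?_⟩
  have hc : Tendsto (fun x : ℝ => 1 - (2 / (d:ℝ)) * Real.sqrt ((d:ℝ) - 1) * Real.cos x)
      (nhds 0) (nhds (1 - (2 / (d:ℝ)) * Real.sqrt ((d:ℝ) - 1))) := by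
    have hcont : Continuous (fun x : ℝ =>
        1 - (2 / (d:ℝ)) * Real.sqrt ((d:ℝ) - 1) * Real.cos x) := by fun_prop
    have := hcont.tendsto 0
    simpa using this
  exact hc.comp h1
end
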